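/- Let 1 < r < ∞ and 1 < q < ∞, and let f : ℝ → ℝ be continuously differentiable with f ∈ L^r(ℝ) and f' ∈ L^q(ℝ). Then f is bounded, lim_{x→±∞} f(x) = 0, and ‖f‖_∞ ≤ C(r,q)(‖f‖_{L^r(ℝ)} + ‖f'‖_{L^q(ℝ)}) for a constant C(r,q) depending only on r and q. -/

import Mathlib

open MeasureTheory Real Filter

lemma aux_holder (g : ℝ → ℝ) (p : ℝ) (hp : 1 < p) (x : ℝ)
    (hmem : MemLp g (ENNReal.ofReal p) (volume.restrict (Set.Ioc x (x+1)))) :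
    ∫ y in Set.Ioc x (x+1), |g y| ≤ (∫ y in Set.Ioc x (x+1), |g y| ^ p) ^ p⁻¹ := by
  set μ := volume.restrict (Set.Ioc x (x+1)) with hμdef
  have hμ : IsProbabilityMeasure μ := ⟨by simp [hμdef, Real.volume_Ioc]⟩
  have hple : (1 : ENNReal) ≤ ENNReal.ofReal p := by
    rw [show (1:ENNReal) = ENNReal.ofReal 1 by simp]
    exact ENNReal.ofReal_le_ofReal hp.le
  have hp0 : ENNReal.ofReal p ≠ 0 := by
    simpa using (lt_of_lt_of_le one_pos hple).ne'
  have h1 : MemLp g 1 μ := hmem.mono_exponent hple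
  have e1 : eLpNorm g 1 μ = ENNReal.ofReal (∫ y, |g y| ∂μ) := by
    rw [h1.eLpNorm_eq_integral_rpow_norm one_ne_zero ENNReal.one_ne_top]
    simp [Real.norm_eq_abs]
  have hpt : (ENNReal.ofReal p).toReal = p := ENNReal.toReal_ofReal (by linarith)
  have e2 : eLpNorm g (ENNReal.ofReal p) μ
      = ENNReal.ofReal ((∫ y, |g y| ^ p ∂μ) ^ p⁻¹) := by
    rw [hmem.eLpNorm_eq_integral_rpow_norm hp0 ENNReal.ofReal_ne_top, hpt]
    simp [Real.norm_eq_abs]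
  have hle := eLpNorm_le_eLpNorm_mul_rpow_measure_univ hple hmem.1
  rw [measure_univ] at hle
  simp only [ENNReal.one_rpow, mul_one] at hle
  rw [e1, e2] at hle
  have hnn : (0:ℝ) ≤ (∫ y, |g y| ^ p ∂μ) ^ p⁻¹ := by positivity
  exact (ENNReal.ofReal_le_ofReal_iff hnn).mp hle

lemma aux_ptwise (f : ℝ → ℝ) (hf : ContDiff ℝ 1 f) (x : ℝ) :
    |f x| ≤ (∫ y in Set.Ioc x (x+1), |f y|) + ∫ y in Set.Ioc x (x+1), |deriv f y| := by
  have hfc : Continuous f := hf.continuous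
  have hdc : Continuous (deriv f) := hf.continuous_deriv le_rfl
  set A := ∫ y in Set.Ioc x (x+1), |deriv f y| with hA
  have hint_d : IntegrableOn (fun y => |deriv f y|) (Set.Ioc x (x+1)) volume :=
    hdc.abs.integrableOn_Ioc
  have key : ∀ y ∈ Set.Ioc x (x+1), |f x| - A ≤ |f y| := by
    intro y hy
    have hxy : x ≤ y := hy.1.le
    have hftc : ∫ t in x..y, deriv f t = f y - f x :=
      intervalIntegral.integral_deriv_eq_sub
        (fun t _ => (hf.differentiable one_ne_zero).differentiableAt)
        (hdc.intervalIntegrable x y)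
    have h2 : |∫ t in x..y, deriv f t| ≤ A := by
      rw [intervalIntegral.integral_of_le hxy]
      calc |∫ t in Set.Ioc x y, deriv f t|
          ≤ ∫ t in Set.Ioc x y, |deriv f t| := by
            simpa [Real.norm_eq_abs] using
              norm_integral_le_integral_norm (μ := volume.restrict (Set.Ioc x y))
                (f := deriv f)
        _ ≤ A := by
            refine setIntegral_mono_set hint_d ?_ ?_
            · exact Eventually.of_forall fun t => abs_nonneg _
            · exact HasSubset.Subset.eventuallyLE (Set.Ioc_subset_Ioc_right (by linarith [hy.2]))
    have h1 : |f x| ≤ |f y| + |∫ t in x..y, deriv f t| := by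
      rw [hftc]
      calc |f x| = |f y - (f y - f x)| := by ring_nf
        _ ≤ |f y| + |f y - f x| := abs_sub _ _
    linarith
  have hμ1 : (volume (Set.Ioc x (x+1))).toReal = 1 := by
    simp [Real.volume_Ioc]
  have hconst : ∫ _ in Set.Ioc x (x+1), (|f x| - A) = |f x| - A := by
    rw [setIntegral_const, measureReal_def, hμ1, one_smul]
  have hmono : ∫ _ in Set.Ioc x (x+1), (|f x| - A)
      ≤ ∫ y in Set.Ioc x (x+1), |f y| := by
    refine setIntegral_mono_on ?_ hfc.abs.integrableOn_Ioc measurableSet_Ioc key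
    exact (integrableOn_const_iff).mpr (Or.inr (by simp [Real.volume_Ioc]))
  rw [hconst] at hmono
  linarith

lemma aux_tail_eq (g : ℝ → ℝ) (hgi : Integrable g volume) (x : ℝ) :
    ∫ y in Set.Ioc x (x+1), g y
      = (∫ y in (0:ℝ)..(x+1), g y) - ∫ y in (0:ℝ)..x, g y := by
  rw [← intervalIntegral.integral_of_le (by linarith : x ≤ x+1),
    intervalIntegral.integral_interval_sub_left (hgi.intervalIntegrable)
      (hgi.intervalIntegrable)]

lemma aux_tail_top (g : ℝ → ℝ) (hgi : Integrable g volume) :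
    Tendsto (fun x => ∫ y in Set.Ioc x (x+1), g y) atTop (nhds 0) := by
  have h1 : Tendsto (fun x : ℝ => ∫ y in (0:ℝ)..(x+1), g y) atTop
      (nhds (∫ y in Set.Ioi (0:ℝ), g y)) :=
    intervalIntegral_tendsto_integral_Ioi 0 hgi.integrableOn
      (tendsto_atTop_add_const_right _ 1 tendsto_id)
  have h2 : Tendsto (fun x : ℝ => ∫ y in (0:ℝ)..x, g y) atTop
      (nhds (∫ y in Set.Ioi (0:ℝ), g y)) :=
    intervalIntegral_tendsto_integral_Ioi 0 hgi.integrableOn tendsto_id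
  have := h1.sub h2
  rw [sub_self] at this
  refine this.congr fun x => (aux_tail_eq g hgi x).symm

lemma aux_tail_bot (g : ℝ → ℝ) (hgi : Integrable g volume) :
    Tendsto (fun x => ∫ y in Set.Ioc x (x+1), g y) atBot (nhds 0) := by
  have h1 : Tendsto (fun x : ℝ => ∫ y in x..(0:ℝ), g y) atBot
      (nhds (∫ y in Set.Iic (0:ℝ), g y)) :=
    intervalIntegral_tendsto_integral_Iic 0 hgi.integrableOn tendsto_id
  have h2 : Tendsto (fun x : ℝ => ∫ y in (x+1)..(0:ℝ), g y) atBot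
      (nhds (∫ y in Set.Iic (0:ℝ), g y)) :=
    intervalIntegral_tendsto_integral_Iic 0 hgi.integrableOn
      (tendsto_atBot_add_const_right _ 1 tendsto_id)
  have := h1.sub h2
  rw [sub_self] at this
  refine this.congr fun x => ?_
  rw [aux_tail_eq g hgi x, intervalIntegral.integral_symm x 0,
    intervalIntegral.integral_symm (x+1) 0]
  ring

/-- Sobolev-type embedding used in the proof of Proposition 5.6: if `f ∈ C¹(ℝ)` with
`f ∈ L^r(ℝ)` and `f' ∈ L^q(ℝ)` for some `1 < r, q < ∞`, then `f` is bounded, vanishes at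
`±∞`, and `‖f‖_∞ ≤ C(r,q)(‖f‖_{L^r} + ‖f'‖_{L^q})`. -/
theorem statement17 (r q : ℝ) (hr : 1 < r) (hq : 1 < q) :
    ∃ C : ℝ, ∀ f : ℝ → ℝ, ContDiff ℝ 1 f →
      MemLp f (ENNReal.ofReal r) volume →
      MemLp (deriv f) (ENNReal.ofReal q) volume →
      Filter.Tendsto f Filter.atTop (nhds 0) ∧
      Filter.Tendsto f Filter.atBot (nhds 0) ∧
      ∀ x : ℝ, |f x| ≤ C * ((eLpNorm f (ENNReal.ofReal r) volume).toReal +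
        (eLpNorm (deriv f) (ENNReal.ofReal q) volume).toReal) := by
  refine ⟨1, fun f hf hfr hfq => ?_⟩
  have hr0 : ENNReal.ofReal r ≠ 0 := by
    simp [ENNReal.ofReal_eq_zero]; linarith
  have hq0 : ENNReal.ofReal q ≠ 0 := by
    simp [ENNReal.ofReal_eq_zero]; linarith
  have hrt : (ENNReal.ofReal r).toReal = r := ENNReal.toReal_ofReal (by linarith)
  have hqt : (ENNReal.ofReal q).toReal = q := ENNReal.toReal_ofReal (by linarith)
  -- integrability of |f|^r and |deriv f|^q
  have hir : Integrable (fun y => |f y| ^ r) volume := by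
    have := hfr.integrable_norm_rpow hr0 ENNReal.ofReal_ne_top
    simpa [Real.norm_eq_abs, hrt] using this
  have hiq : Integrable (fun y => |deriv f y| ^ q) volume := by
    have := hfq.integrable_norm_rpow hq0 ENNReal.ofReal_ne_top
    simpa [Real.norm_eq_abs, hqt] using this
  -- pointwise bound
  have hbound : ∀ x : ℝ, |f x| ≤
      (∫ y in Set.Ioc x (x+1), |f y| ^ r) ^ r⁻¹
        + (∫ y in Set.Ioc x (x+1), |deriv f y| ^ q) ^ q⁻¹ := by
    intro x
    refine (aux_ptwise f hf x).trans (add_le_add ?_ ?_)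
    · exact aux_holder f r hr x (hfr.restrict _)
    · exact aux_holder (deriv f) q hq x (hfq.restrict _)
  -- tendsto of the bound
  have hrpow_r : Tendsto (fun t : ℝ => t ^ r⁻¹) (nhds 0) (nhds 0) := by
    have h := (Real.continuousAt_rpow_const 0 r⁻¹ (Or.inr (by positivity))).tendsto
    simpa [Real.zero_rpow (show r⁻¹ ≠ 0 by positivity)] using h
  have hrpow_q : Tendsto (fun t : ℝ => t ^ q⁻¹) (nhds 0) (nhds 0) := by
    have h := (Real.continuousAt_rpow_const 0 q⁻¹ (Or.inr (by positivity))).tendsto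
    simpa [Real.zero_rpow (show q⁻¹ ≠ 0 by positivity)] using h
  have htop : Tendsto (fun x : ℝ => (∫ y in Set.Ioc x (x+1), |f y| ^ r) ^ r⁻¹
      + (∫ y in Set.Ioc x (x+1), |deriv f y| ^ q) ^ q⁻¹) atTop (nhds 0) := by
    have h1 := hrpow_r.comp (aux_tail_top _ hir)
    have h2 := hrpow_q.comp (aux_tail_top _ hiq)
    simpa using h1.add h2
  have hbot : Tendsto (fun x : ℝ => (∫ y in Set.Ioc x (x+1), |f y| ^ r) ^ r⁻¹
      + (∫ y in Set.Ioc x (x+1), |deriv f y| ^ q) ^ q⁻¹) atBot (nhds 0) := by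
    have h1 := hrpow_r.comp (aux_tail_bot _ hir)
    have h2 := hrpow_q.comp (aux_tail_bot _ hiq)
    simpa using h1.add h2
  refine ⟨squeeze_zero_norm (fun x => by simpa [Real.norm_eq_abs] using hbound x) htop,
    squeeze_zero_norm (fun x => by simpa [Real.norm_eq_abs] using hbound x) hbot, ?_⟩
  intro x
  rw [one_mul]
  have h1 : (∫ y in Set.Ioc x (x+1), |f y| ^ r) ^ r⁻¹
      ≤ (eLpNorm f (ENNReal.ofReal r) volume).toReal := by
    rw [hfr.eLpNorm_eq_integral_rpow_norm hr0 ENNReal.ofReal_ne_top, hrt,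
      ENNReal.toReal_ofReal (by positivity)]
    simp only [Real.norm_eq_abs]
    refine Real.rpow_le_rpow (setIntegral_nonneg measurableSet_Ioc fun y _ => by positivity)
      ?_ (by positivity)
    exact setIntegral_le_integral hir (Eventually.of_forall fun y => by positivity)
  have h2 : (∫ y in Set.Ioc x (x+1), |deriv f y| ^ q) ^ q⁻¹
      ≤ (eLpNorm (deriv f) (ENNReal.ofReal q) volume).toReal := by
    rw [hfq.eLpNorm_eq_integral_rpow_norm hq0 ENNReal.ofReal_ne_top, hqt,
      ENNReal.toReal_ofReal (by positivity)]
    simp only [Real.norm_eq_abs]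
    refine Real.rpow_le_rpow (setIntegral_nonneg measurableSet_Ioc fun y _ => by positivity)
      ?_ (by positivity)
    exact setIntegral_le_integral hiq (Eventually.of_forall fun y => by positivity)
  linarith [hbound x]
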